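/- Every separable d-permutation avoids the pattern π1 = (rows: 1234 / 2413): no separable d-permutation contains two rows and four columns whose induced relative order pattern is (1234, 2413). -/
import Mathlib


/-- `P` is a `d`-permutation: a sequence of `d` permutations of `[n]`
whose first entry is the identity. -/
def IsDPerm {d n : ℕ} (P : Fin d → Equiv.Perm (Fin n)) : Prop :=
  ∀ h : 0 < d, P ⟨0, h⟩ = 1

/-- Separability of the restriction of the `d` rows `P` to the block of
columns `[a, b)`: either the block consists of a single column, or it can be
split into two consecutive sub-blocks such that in each row all entries of one
sub-block are smaller than all entries of the other, and both sub-blocks are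
themselves separable. -/
inductive SepOn {d : ℕ} (P : Fin d → ℕ → ℕ) : ℕ → ℕ → Prop
  | single (a : ℕ) : SepOn P a (a + 1)
  | split (a l b : ℕ) (h1 : a < l) (h2 : l < b)
      (hmono : ∀ i : Fin d,
        (∀ j1 j2, a ≤ j1 → j1 < l → l ≤ j2 → j2 < b → P i j1 < P i j2) ∨
        (∀ j1 j2, a ≤ j1 → j1 < l → l ≤ j2 → j2 < b → P i j2 < P i j1))
      (hL : SepOn P a l) (hR : SepOn P l b) : SepOn P a b

/-- The rows of a `d`-permutation, as functions `ℕ → ℕ`. -/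
def dPermRows {d n : ℕ} (P : Fin d → Equiv.Perm (Fin n)) : Fin d → ℕ → ℕ :=
  fun i j => if h : j < n then (P i ⟨j, h⟩ : ℕ) else 0

/-- A `d`-permutation of `[n]` is separable if its full block of columns is
recursively separable. -/
def IsSepDPerm {d n : ℕ} (P : Fin d → Equiv.Perm (Fin n)) : Prop :=
  SepOn (dPermRows P) 0 n


lemma sep_key {d : ℕ} {Q : Fin d → ℕ → ℕ} {a b : ℕ} (h : SepOn Q a b) :
    ∀ (i₁ i₂ : Fin d) (j0 j1 j2 j3 : ℕ),
      a ≤ j0 → j0 < b → a ≤ j1 → j1 < b → a ≤ j2 → j2 < b → a ≤ j3 → j3 < b →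
      Q i₁ j0 < Q i₁ j1 → Q i₁ j1 < Q i₁ j2 → Q i₁ j2 < Q i₁ j3 →
      Q i₂ j2 < Q i₂ j0 → Q i₂ j0 < Q i₂ j3 → Q i₂ j3 < Q i₂ j1 → False := by
  induction h with
  | single a =>
    intro i₁ i₂ j0 j1 j2 j3 a0 b0 a1 b1 a2 b2 a3 b3 p01 p12 p23 q20 q03 q31
    have e0 : j0 = a := by omega
    have e1 : j1 = a := by omega
    rw [e0, e1] at p01
    exact lt_irrefl _ p01
  | split a l b h1 h2 hmono hL hR ihL ihR =>
    intro i₁ i₂ j0 j1 j2 j3 a0 b0 a1 b1 a2 b2 a3 b3 p01 p12 p23 q20 q03 q31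
    have H1 : ((j3 < l → j2 < l) ∧ (j2 < l → j1 < l) ∧ (j1 < l → j0 < l)) ∨
        ((j0 < l → j1 < l) ∧ (j1 < l → j2 < l) ∧ (j2 < l → j3 < l)) := by
      rcases hmono i₁ with H | H
      · left
        refine ⟨fun h => ?_, fun h => ?_, fun h => ?_⟩ <;> by_contra h'
        · have := H j3 j2 (by omega) h (by omega) (by omega); omega
        · have := H j2 j1 (by omega) h (by omega) (by omega); omega
        · have := H j1 j0 (by omega) h (by omega) (by omega); omega
      · right
        refine ⟨fun h => ?_, fun h => ?_, fun h => ?_⟩ <;> by_contra h'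
        · have := H j0 j1 (by omega) h (by omega) (by omega); omega
        · have := H j1 j2 (by omega) h (by omega) (by omega); omega
        · have := H j2 j3 (by omega) h (by omega) (by omega); omega
    have H2 : ((j1 < l → j3 < l) ∧ (j3 < l → j0 < l) ∧ (j0 < l → j2 < l)) ∨
        ((j2 < l → j0 < l) ∧ (j0 < l → j3 < l) ∧ (j3 < l → j1 < l)) := by
      rcases hmono i₂ with H | H
      · left
        refine ⟨fun h => ?_, fun h => ?_, fun h => ?_⟩ <;> by_contra h'
        · have := H j1 j3 (by omega) h (by omega) (by omega); omega
        · have := H j3 j0 (by omega) h (by omega) (by omega); omega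
        · have := H j0 j2 (by omega) h (by omega) (by omega); omega
      · right
        refine ⟨fun h => ?_, fun h => ?_, fun h => ?_⟩ <;> by_contra h'
        · have := H j2 j0 (by omega) h (by omega) (by omega); omega
        · have := H j0 j3 (by omega) h (by omega) (by omega); omega
        · have := H j3 j1 (by omega) h (by omega) (by omega); omega
    have Hall : (j0 < l ∧ j1 < l ∧ j2 < l ∧ j3 < l) ∨
        (¬ j0 < l ∧ ¬ j1 < l ∧ ¬ j2 < l ∧ ¬ j3 < l) := by
      rcases H1 with ⟨A, B, C⟩ | ⟨A, B, C⟩ <;> rcases H2 with ⟨D, E, F⟩ | ⟨D, E, F⟩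
      · by_cases h : j1 < l
        · exact Or.inl ⟨C h, h, A (D h), D h⟩
        · exact Or.inr ⟨fun x => h (B (F x)), h, fun x => h (B x), fun x => h (B (A x))⟩
      · by_cases h : j2 < l
        · exact Or.inl ⟨C (B h), B h, h, E (C (B h))⟩
        · exact Or.inr ⟨fun x => h (A (E x)), fun x => h (A (E (C x))), h, fun x => h (A x)⟩
      · by_cases h : j3 < l
        · exact Or.inl ⟨E h, A (E h), B (A (E h)), h⟩
        · exact Or.inr ⟨fun x => h (C (F x)), fun x => h (D x), fun x => h (C x), h⟩
      · by_cases h : j0 < l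
        · exact Or.inl ⟨h, A h, B (A h), C (B (A h))⟩
        · exact Or.inr ⟨h, fun x => h (D (B x)), fun x => h (D x), fun x => h (D (B (F x)))⟩
    rcases Hall with ⟨e0, e1, e2, e3⟩ | ⟨e0, e1, e2, e3⟩
    · exact ihL i₁ i₂ j0 j1 j2 j3 a0 e0 a1 e1 a2 e2 a3 e3 p01 p12 p23 q20 q03 q31
    · exact ihR i₁ i₂ j0 j1 j2 j3 (by omega) b0 (by omega) b1 (by omega) b2
        (by omega) b3 p01 p12 p23 q20 q03 q31

/-- Every separable d-permutation avoids the pattern `π₁ = (1234 / 2413)`: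
there are no two distinct rows `i₁, i₂` and four columns (which we may list so
that row `i₁` is increasing on them) such that row `i₁` induces the pattern
`1234` and row `i₂` induces the pattern `2413`. -/
theorem sep_dPerm_avoids_pi1 (d n : ℕ) (P : Fin d → Equiv.Perm (Fin n))
    (hP : IsDPerm P) (hsep : IsSepDPerm P) :
    ¬ ∃ (i₁ i₂ : Fin d) (c : Fin 4 → Fin n), i₁ ≠ i₂ ∧
        Function.Injective c ∧
        StrictMono (fun j : Fin 4 => P i₁ (c j)) ∧
        (∀ j k : Fin 4, (![1, 3, 0, 2] : Fin 4 → Fin 4) j < ![1, 3, 0, 2] k ↔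
          P i₂ (c j) < P i₂ (c k)) := by
  rintro ⟨i₁, i₂, c, -, -, hmono, hpat⟩
  have hrow : ∀ (i : Fin d) (k : Fin 4), dPermRows P i (c k) = (P i (c k) : ℕ) := by
    intro i k
    simp [dPermRows, (c k).isLt]
  have hlt : ∀ (i : Fin d) (k m : Fin 4), P i (c k) < P i (c m) →
      dPermRows P i (c k) < dPermRows P i (c m) := by
    intro i k m h
    rw [hrow, hrow]
    exact_mod_cast h
  refine sep_key hsep i₁ i₂ (c 0) (c 1) (c 2) (c 3)
    (Nat.zero_le _) (c 0).isLt (Nat.zero_le _) (c 1).isLt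
    (Nat.zero_le _) (c 2).isLt (Nat.zero_le _) (c 3).isLt
    (hlt i₁ 0 1 (hmono (by decide))) (hlt i₁ 1 2 (hmono (by decide)))
    (hlt i₁ 2 3 (hmono (by decide)))
    (hlt i₂ 2 0 ((hpat 2 0).mp (by decide)))
    (hlt i₂ 0 3 ((hpat 0 3).mp (by decide)))
    (hlt i₂ 3 1 ((hpat 3 1).mp (by decide)))
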